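/- Let H be a finitely generated subgroup of a finitely generated group G. If the distortion function Δ_H^G is linear (H is undistorted), then Cone^ω_G(H) is connected (indeed path connected) for all non-principal ultrafilters ω. -/

import Mathlib

open Filter

/-- A chain (m-path) of length `k` from `a` to `b`. -/
def IsRPath {S : Type*} [MetricSpace S] (m : ℝ) (k : ℕ) (a b : S) (c : ℕ → S) : Prop :=
  c 0 = a ∧ c k = b ∧ ∀ i < k, dist (c i) (c (i + 1)) ≤ m

/-- `|t|_m`: the minimal length of an `m`-path from `s` to `t`. -/
noncomputable def pathLen {S : Type*} [MetricSpace S] (s : S) (m : ℝ) (t : S) : ℕ :=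
  sInf {k : ℕ | ∃ c : ℕ → S, IsRPath m k s t c}

/-- `ν_S(m, n) = max { |t|_m : d(s,t) ≤ n }`. -/
noncomputable def nu {S : Type*} [MetricSpace S] (s : S) (m n : ℝ) : ℕ :=
  sSup (pathLen s m '' {t : S | dist s t ≤ n})

/-- An ultrafilter on `ℕ` is non-principal iff it contains the cofinite filter. -/
def Nonprincipal (ω : Ultrafilter ℕ) : Prop := (ω : Filter ℕ) ≤ Filter.cofinite

/-- Admissible sequences for the asymptotic cone with scaling sequence `cᵢ = i`:
sequences at bounded scaled distance from the observation point `s`. The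
ultrafilter `ω` is a parameter fixing the pseudometric below. -/
structure Precone (S : Type*) [MetricSpace S] (s : S) (ω : Ultrafilter ℕ) : Type _ where
  seq : ℕ → S
  bounded : ∃ B : ℝ, ∀ i : ℕ, 1 ≤ i → dist s (seq i) ≤ B * i

namespace Precone

variable {S : Type*} [MetricSpace S] {s : S} {ω : Ultrafilter ℕ}

lemma bounded_div (x y : Precone S s ω) :
    ∃ B : ℝ, ∀ i : ℕ, dist (x.seq i) (y.seq i) / i ∈ Set.Icc (0:ℝ) B := by
  obtain ⟨Bx, hBx⟩ := x.bounded
  obtain ⟨By, hBy⟩ := y.bounded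
  refine ⟨max (Bx + By) 0, fun i => ⟨by positivity, ?_⟩⟩
  rcases Nat.eq_zero_or_pos i with h | h
  · simp [h, le_max_right]
  · have hi : (0:ℝ) < i := by exact_mod_cast h
    have h1 : dist (x.seq i) (y.seq i) ≤ (Bx + By) * i := by
      calc dist (x.seq i) (y.seq i) ≤ dist s (x.seq i) + dist s (y.seq i) :=
            dist_triangle_left _ _ _
        _ ≤ Bx * i + By * i := add_le_add (hBx i h) (hBy i h)
        _ = (Bx + By) * i := by ring
    have h2 : dist (x.seq i) (y.seq i) / i ≤ ((Bx + By) * i) / i := by gcongr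
    have h3 : ((Bx + By) * i : ℝ) / i = Bx + By := mul_div_cancel_right₀ _ (ne_of_gt hi)
    rw [h3] at h2
    exact le_trans h2 (le_max_left _ _)

/-- The `ω`-limit defining the cone pseudometric exists. -/
lemma tendsto_pdist (x y : Precone S s ω) :
    Tendsto (fun i => dist (x.seq i) (y.seq i) / i) (ω : Filter ℕ)
      (nhds (limUnder (ω : Filter ℕ) (fun i => dist (x.seq i) (y.seq i) / i))) := by
  obtain ⟨B, hB⟩ := bounded_div x y
  have hle : (ω.map (fun i => dist (x.seq i) (y.seq i) / i) : Filter ℝ) ≤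
      Filter.principal (Set.Icc 0 B) := by
    rw [Filter.le_principal_iff]
    exact Filter.mem_map.2 (Filter.univ_mem' hB)
  obtain ⟨c, -, hc⟩ := isCompact_Icc.ultrafilter_le_nhds
    (ω.map (fun i => dist (x.seq i) (y.seq i) / i)) hle
  exact tendsto_nhds_limUnder ⟨c, hc⟩

end Precone

/-- The pseudometric `d^ω((xᵢ),(yᵢ)) = limᵂ d(xᵢ,yᵢ)/i` on admissible sequences. -/
noncomputable instance preconePseudoMetric (S : Type*) [MetricSpace S] (s : S)
    (ω : Ultrafilter ℕ) : PseudoMetricSpace (Precone S s ω) where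
  dist x y := limUnder (ω : Filter ℕ) (fun i => dist (x.seq i) (y.seq i) / i)
  dist_self x := by
    have h : (fun i : ℕ => dist (x.seq i) (x.seq i) / i) = fun _ => (0 : ℝ) := by
      funext i; simp
    show limUnder (ω : Filter ℕ) _ = 0
    rw [h]
    exact tendsto_const_nhds.limUnder_eq
  dist_comm x y := by
    show limUnder _ _ = limUnder _ _
    congr 1
    funext i
    rw [dist_comm]
  dist_triangle x y z := by
    show limUnder (ω : Filter ℕ) _ ≤ limUnder _ _ + limUnder _ _
    have hxz := x.tendsto_pdist z
    have hxy := x.tendsto_pdist y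
    have hyz := y.tendsto_pdist z
    refine le_of_tendsto_of_tendsto hxz (hxy.add hyz) (Filter.univ_mem' fun i => ?_)
    have h1 : dist (x.seq i) (z.seq i) ≤
        dist (x.seq i) (y.seq i) + dist (y.seq i) (z.seq i) := dist_triangle _ _ _
    have hi : (0:ℝ) ≤ i := Nat.cast_nonneg i
    calc dist (x.seq i) (z.seq i) / i
        ≤ (dist (x.seq i) (y.seq i) + dist (y.seq i) (z.seq i)) / i := by
          rcases eq_or_lt_of_le hi with h | h
          · simp [← h]
          · gcongr
      _ = dist (x.seq i) (y.seq i) / i + dist (y.seq i) (z.seq i) / i := add_div _ _ _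

/-- The asymptotic cone of `(S, s)` with respect to `ω` (scaling `cᵢ = i`): the metric
quotient of the admissible sequences by the pseudometric `d^ω`. -/
abbrev Cone (S : Type*) [MetricSpace S] (s : S) (ω : Ultrafilter ℕ) : Type _ :=
  SeparationQuotient (Precone S s ω)

/-- `Cone^ω_S(T)`: points of the asymptotic cone with a representative sequence all of
whose components lie in `T`. -/
def coneSet {S : Type*} [MetricSpace S] (s : S) (ω : Ultrafilter ℕ) (T : Set S) :
    Set (Cone S s ω) :=
  {p | ∃ x : Precone S s ω, (∀ i, x.seq i ∈ T) ∧ SeparationQuotient.mk x = p}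

/-- `g` is a product of `k` elements of `A ∪ A⁻¹`. -/
def IsWord {G : Type*} [Group G] (A : Set G) (k : ℕ) (g : G) : Prop :=
  ∃ l : List G, l.length = k ∧ (∀ x ∈ l, x ∈ A ∨ x⁻¹ ∈ A) ∧ l.prod = g

/-- Word length of `g` with respect to the generating set `A`. -/
noncomputable def wlen {G : Type*} [Group G] (A : Set G) (g : G) : ℕ :=
  sInf {k : ℕ | IsWord A k g}

lemma word_exists {G : Type*} [Group G] {A : Set G} {g : G}
    (h : g ∈ Subgroup.closure A) : ∃ k, IsWord A k g := by
  rw [← Subgroup.mem_toSubmonoid, Subgroup.closure_toSubmonoid] at h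
  obtain ⟨l, h1, h2⟩ := Submonoid.exists_list_of_mem_closure h
  refine ⟨l.length, l, rfl, fun x hx => ?_, h2⟩
  rcases h1 x hx with h | h
  · exact Or.inl h
  · exact Or.inr (Set.mem_inv.mp h)

lemma isWord_wlen {G : Type*} [Group G] {A : Set G} {g : G}
    (h : g ∈ Subgroup.closure A) : IsWord A (wlen A g) g :=
  Nat.sInf_mem (word_exists h)

lemma wlen_le {G : Type*} [Group G] {A : Set G} {k : ℕ} {g : G}
    (h : IsWord A k g) : wlen A g ≤ k := Nat.sInf_le h

lemma wlen_mul_le {G : Type*} [Group G] {A : Set G} (hA : Subgroup.closure A = ⊤)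
    (g h : G) : wlen A (g * h) ≤ wlen A g + wlen A h := by
  obtain ⟨la, ha1, ha2, ha3⟩ := isWord_wlen (A := A) (g := g) (by rw [hA]; trivial)
  obtain ⟨lb, hb1, hb2, hb3⟩ := isWord_wlen (A := A) (g := h) (by rw [hA]; trivial)
  refine wlen_le ⟨la ++ lb, by simp [ha1, hb1], fun x hx => ?_, by simp [ha3, hb3]⟩
  rcases List.mem_append.mp hx with h | h
  · exact ha2 x h
  · exact hb2 x h

lemma wlen_prod_le {G : Type*} [Group G] {A : Set G} (hA : Subgroup.closure A = ⊤)
    (M : ℕ) : ∀ l : List G, (∀ a ∈ l, wlen A a ≤ M) → wlen A l.prod ≤ M * l.length := by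
  intro l
  induction l with
  | nil => intro _; simpa using Nat.le_zero.mp (wlen_le (A:=A) ⟨[], rfl, by simp, rfl⟩)
  | cons a l ih =>
    intro h
    calc wlen A (a :: l).prod ≤ wlen A a + wlen A l.prod := by
          rw [List.prod_cons]; exact wlen_mul_le hA _ _
      _ ≤ M + M * l.length := add_le_add (h a List.mem_cons_self) (ih fun b hb => h b (List.mem_cons_of_mem a hb))
      _ = M * (a :: l).length := by simp [List.length_cons]; ring


lemma Precone.ext' {S : Type*} [MetricSpace S] {s : S} {ω : Ultrafilter ℕ}
    {x y : Precone S s ω} (h : x.seq = y.seq) : x = y := by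
  cases x; cases y; simp_all

/-- if a finitely generated subgroup `H` of a finitely generated group
`G` (with the word metric of `X`) is undistorted (linear distortion function), then
`Cone^ω_G(H)` is path connected (in particular connected) for every non-principal
ultrafilter `ω`. -/
theorem coneSet_pathConnected_of_undistorted {G : Type*} [Group G] [MetricSpace G]
    (X Y : Set G) (hXfin : X.Finite) (hYfin : Y.Finite)
    (hXgen : Subgroup.closure X = ⊤)
    (H : Subgroup G) (hYH : Y ⊆ (H : Set G)) (hYgen : Subgroup.closure Y = H)
    (hdist : ∀ g h : G, dist g h = wlen X (g⁻¹ * h))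
    (hundist : ∃ C : ℕ, 0 < C ∧ ∀ h ∈ H, wlen Y h ≤ C * wlen X h + C) :
    ∀ ω : Ultrafilter ℕ, Nonprincipal ω →
      IsPathConnected (coneSet (1 : G) ω (H : Set G)) := by
  obtain ⟨C, hC, hCd⟩ := hundist
  intro ω hω
  have hwx : ∀ g : G, (wlen X g : ℝ) = dist (1:G) g := by
    intro g; rw [hdist 1 g, inv_one, one_mul]
  set base : Precone G 1 ω := ⟨fun _ => 1, 0, fun i _ => by simp⟩ with hbase
  have hbmem : SeparationQuotient.mk base ∈ coneSet (1:G) ω (H : Set G) :=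
    ⟨base, fun _ => H.one_mem, rfl⟩
  refine ⟨SeparationQuotient.mk base, hbmem, ?_⟩
  intro p hp
  obtain ⟨x, hxH, rfl⟩ := hp
  -- bound on word lengths of generators
  obtain ⟨M, hMub⟩ := ((hYfin.union hYfin.inv).image (wlen X)).bddAbove
  have hM : ∀ a : G, (a ∈ Y ∨ a⁻¹ ∈ Y) → wlen X a ≤ M := by
    intro a ha
    refine hMub ⟨a, ?_, rfl⟩
    rcases ha with h | h
    · exact Or.inl h
    · exact Or.inr (Set.mem_inv.mpr h)
  -- choose geodesic words
  have hxcl : ∀ i, x.seq i ∈ Subgroup.closure Y := fun i => by rw [hYgen]; exact hxH i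
  have hword : ∀ i, ∃ lw : List G, lw.length = wlen Y (x.seq i) ∧
      (∀ a ∈ lw, a ∈ Y ∨ a⁻¹ ∈ Y) ∧ lw.prod = x.seq i := fun i => isWord_wlen (hxcl i)
  choose l hlen hlmem hlprod using hword
  set L : ℕ → ℕ := fun i => wlen Y (x.seq i) with hLdef
  obtain ⟨Bx, hBx⟩ := x.bounded
  have hBx0 : 0 ≤ Bx := by
    have h1 := hBx 1 le_rfl
    have h2 : (0:ℝ) ≤ dist (1:G) (x.seq 1) := dist_nonneg
    push_cast at h1
    nlinarith
  set D : ℝ := (C:ℝ) * Bx + C with hDdef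
  have hD0 : 0 ≤ D := by positivity
  have hL : ∀ i : ℕ, 1 ≤ i → (L i : ℝ) ≤ D * i := by
    intro i hi
    have h1 : (L i : ℝ) ≤ C * (wlen X (x.seq i) : ℝ) + C := by
      exact_mod_cast hCd (x.seq i) (hxH i)
    have h2 : (wlen X (x.seq i) : ℝ) ≤ Bx * i := by rw [hwx]; exact hBx i hi
    have hi1 : (1:ℝ) ≤ i := by exact_mod_cast hi
    have hC0 : (0:ℝ) ≤ C := by positivity
    nlinarith
  have hlH : ∀ i, ∀ a ∈ l i, a ∈ H := by
    intro i a ha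
    rcases hlmem i a ha with h | h
    · exact hYH h
    · exact H.inv_mem_iff.mp (hYH h)
  have hpref : ∀ (i n : ℕ), (wlen X (((l i).take n).prod) : ℝ) ≤ M * L i := by
    intro i n
    have h1 : wlen X (((l i).take n).prod) ≤ M * ((l i).take n).length :=
      wlen_prod_le hXgen M _ (fun a ha => hM a (hlmem i a (List.mem_of_mem_take ha)))
    have h2 : ((l i).take n).length ≤ L i := by
      have hli : (l i).length = L i := hlen i
      rw [List.length_take, hli]; exact min_le_right _ _
    calc (wlen X (((l i).take n).prod) : ℝ)
        ≤ ((M * ((l i).take n).length : ℕ) : ℝ) := by exact_mod_cast h1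
      _ ≤ ((M * L i : ℕ) : ℝ) := by exact_mod_cast Nat.mul_le_mul_left M h2
      _ = (M : ℝ) * L i := by push_cast; ring
  have hzb : ∀ t : ℝ, ∀ i : ℕ, 1 ≤ i →
      dist (1:G) (((l i).take ⌈t * (L i : ℝ)⌉₊).prod) ≤ ((M:ℝ) * D) * i := by
    intro t i hi
    rw [← hwx]
    calc (wlen X (((l i).take ⌈t * (L i : ℝ)⌉₊).prod) : ℝ) ≤ (M:ℝ) * L i := hpref i _
      _ ≤ (M:ℝ) * (D * i) := mul_le_mul_of_nonneg_left (hL i hi) (Nat.cast_nonneg M)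
      _ = ((M:ℝ) * D) * i := by ring
  let z : ℝ → Precone G 1 ω := fun t =>
    ⟨fun i => ((l i).take ⌈t * (L i : ℝ)⌉₊).prod, (M:ℝ) * D, hzb t⟩
  have hseg : ∀ (t t' : ℝ), 0 ≤ t' → t ≤ t' → ∀ i : ℕ,
      dist ((z t).seq i) ((z t').seq i) ≤ (M:ℝ) * ((t' - t) * L i + 1) := by
    intro t t' ht0 htt i
    set n := ⌈t * (L i : ℝ)⌉₊ with hn
    set n' := ⌈t' * (L i : ℝ)⌉₊ with hn'
    have hnn' : n ≤ n' := Nat.ceil_mono (mul_le_mul_of_nonneg_right htt (Nat.cast_nonneg _))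
    have hsplit : (l i).take n' = (l i).take n ++ ((l i).drop n).take (n' - n) := by
      rw [← List.take_add]
      congr 1
      omega
    have hdd : dist ((z t).seq i) ((z t').seq i)
        = (wlen X ((((l i).drop n).take (n' - n)).prod) : ℝ) := by
      show dist ((l i).take n).prod ((l i).take n').prod = _
      rw [hdist, hsplit, List.prod_append, inv_mul_cancel_left]
    rw [hdd]
    have h1 : wlen X ((((l i).drop n).take (n' - n)).prod) ≤ M * (n' - n) := by
      calc wlen X ((((l i).drop n).take (n' - n)).prod)
          ≤ M * (((l i).drop n).take (n' - n)).length :=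
            wlen_prod_le hXgen M _ (fun a ha =>
              hM a (hlmem i a (List.mem_of_mem_drop (List.mem_of_mem_take ha))))
        _ ≤ M * (n' - n) :=
            Nat.mul_le_mul_left M (by rw [List.length_take]; exact min_le_left _ _)
    have h2 : ((n' - n : ℕ) : ℝ) ≤ (t' - t) * L i + 1 := by
      have hc1 : (n' : ℝ) < t' * L i + 1 :=
        Nat.ceil_lt_add_one (mul_nonneg ht0 (Nat.cast_nonneg _))
      have hc2 : t * L i ≤ (n : ℝ) := Nat.le_ceil _
      rw [Nat.cast_sub hnn']
      linarith
    calc (wlen X ((((l i).drop n).take (n' - n)).prod) : ℝ)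
        ≤ ((M * (n' - n) : ℕ) : ℝ) := by exact_mod_cast h1
      _ = (M:ℝ) * ((n' - n : ℕ) : ℝ) := by push_cast; ring
      _ ≤ (M:ℝ) * ((t' - t) * L i + 1) := mul_le_mul_of_nonneg_left h2 (Nat.cast_nonneg M)
  have hone : {i : ℕ | 1 ≤ i} ∈ (ω : Filter ℕ) := by
    apply hω
    rw [Filter.mem_cofinite]
    have he : {i : ℕ | 1 ≤ i}ᶜ = {0} := by
      ext i
      simp only [Set.mem_compl_iff, Set.mem_setOf_eq, Set.mem_singleton_iff, not_le]
      omega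
    rw [he]
    exact Set.finite_singleton 0
  set K : ℝ := (M:ℝ) * D with hKdef
  have hK0 : 0 ≤ K := by positivity
  have hclaim : ∀ t t' : ℝ, 0 ≤ t' → t ≤ t' →
      dist (SeparationQuotient.mk (z t)) (SeparationQuotient.mk (z t')) ≤ K * (t' - t) := by
    intro t t' ht0 htt
    rw [SeparationQuotient.dist_mk]
    have h1 := (z t).tendsto_pdist (z t')
    have h0 : Tendsto (fun i : ℕ => (M:ℝ) / i) (ω : Filter ℕ) (nhds 0) :=
      (tendsto_const_div_atTop_nhds_zero_nat (M:ℝ)).mono_left (by rwa [← Nat.cofinite_eq_atTop])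
    have h2 : Tendsto (fun i : ℕ => K * (t' - t) + (M:ℝ) / i) (ω : Filter ℕ)
        (nhds (K * (t' - t) + 0)) := tendsto_const_nhds.add h0
    have hev : ∀ᶠ i in (ω : Filter ℕ),
        dist ((z t).seq i) ((z t').seq i) / i ≤ K * (t' - t) + (M:ℝ) / i := by
      filter_upwards [hone] with i hi
      have hi0 : (0:ℝ) < i := by exact_mod_cast hi
      have hi1 : (1:ℝ) ≤ i := by exact_mod_cast hi
      have hd := hseg t t' ht0 htt i
      have hLi := hL i hi
      have htt' : (0:ℝ) ≤ t' - t := by linarith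
      have hM0 : (0:ℝ) ≤ M := Nat.cast_nonneg M
      have h3 : dist ((z t).seq i) ((z t').seq i) ≤ (K * (t' - t)) * i + M := by
        calc dist ((z t).seq i) ((z t').seq i) ≤ (M:ℝ) * ((t' - t) * L i + 1) := hd
          _ ≤ (M:ℝ) * ((t' - t) * (D * i) + 1) := by
              refine mul_le_mul_of_nonneg_left ?_ hM0
              nlinarith
          _ = (K * (t' - t)) * i + M := by rw [hKdef]; ring
      calc dist ((z t).seq i) ((z t').seq i) / i ≤ ((K * (t' - t)) * i + M) / i := by
            gcongr
        _ = K * (t' - t) + (M:ℝ) / i := by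
            rw [add_div, mul_div_cancel_right₀ _ (ne_of_gt hi0)]
    have hfin := le_of_tendsto_of_tendsto h1 h2 hev
    rw [add_zero] at hfin
    exact hfin
  have hzmem : ∀ t : ℝ, ∀ i, (z t).seq i ∈ (H : Set G) := fun t i =>
    H.list_prod_mem (fun a ha => hlH i a (List.mem_of_mem_take ha))
  have hz0 : z 0 = base := by
    apply Precone.ext'
    funext i
    show ((l i).take ⌈(0:ℝ) * (L i : ℝ)⌉₊).prod = 1
    norm_num
  have hz1 : z 1 = x := by
    apply Precone.ext'
    funext i
    show ((l i).take ⌈(1:ℝ) * (L i : ℝ)⌉₊).prod = x.seq i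
    have hli : L i = (l i).length := (hlen i).symm
    rw [one_mul, Nat.ceil_natCast, hli, List.take_length, hlprod i]
  have key : ∀ a b : unitInterval, (a:ℝ) ≤ b →
      dist (SeparationQuotient.mk (z ↑a)) (SeparationQuotient.mk (z ↑b)) ≤ K * dist a b := by
    intro a b h
    have h1 := hclaim a b b.2.1 h
    have h2 : ((b:ℝ) - a) ≤ dist a b := by
      rw [Subtype.dist_eq, Real.dist_eq, abs_sub_comm]
      exact le_abs_self _
    calc dist (SeparationQuotient.mk (z ↑a)) (SeparationQuotient.mk (z ↑b))
        ≤ K * ((b:ℝ) - a) := h1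
      _ ≤ K * dist a b := mul_le_mul_of_nonneg_left h2 hK0
  have hlip : LipschitzWith (Real.toNNReal K)
      (fun t : unitInterval => SeparationQuotient.mk (z ↑t)) := by
    apply LipschitzWith.of_dist_le_mul
    intro a b
    rw [Real.coe_toNNReal K hK0]
    rcases le_total (a:ℝ) (b:ℝ) with h | h
    · exact key a b h
    · rw [dist_comm, dist_comm a b]
      exact key b a h
  refine ⟨⟨⟨fun t => SeparationQuotient.mk (z ↑t), hlip.continuous⟩, ?_, ?_⟩,
    fun t => ⟨z ↑t, hzmem _, rfl⟩⟩
  · show SeparationQuotient.mk (z ((0 : unitInterval) : ℝ)) = SeparationQuotient.mk base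
    norm_num [hz0]
  · show SeparationQuotient.mk (z ((1 : unitInterval) : ℝ)) = SeparationQuotient.mk x
    norm_num [hz1]
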